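/- arXiv:1603.00580 — 2 statements merged into one kernel-verified Lean document; each statement's English description precedes it below -/
import Mathlib

section
/- Every vertex of a minimum red-blue-purple spanning graph has degree at most 18. -/
open scoped Classical

noncomputable section

/-- The Euclidean plane. -/
abbrev Pt : Type := EuclideanSpace ℝ (Fin 2)

/-- The simple graph on the plane whose edge set is the finite set `E`. -/
def graphOf (E : Finset (Sym2 Pt)) : SimpleGraph Pt where
  Adj x y := x ≠ y ∧ s(x, y) ∈ E
  symm := ⟨fun x y ⟨hne, he⟩ => ⟨hne.symm, by rwa [Sym2.eq_swap]⟩⟩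
  loopless := ⟨fun x ⟨hne, _⟩ => hne rfl⟩

/-- Euclidean length of an edge. -/
def edgeLen (e : Sym2 Pt) : ℝ :=
  Sym2.lift ⟨fun x y => dist x y, fun _ _ => dist_comm _ _⟩ e

/-- Total Euclidean length of a finite edge set. -/
def weight (E : Finset (Sym2 Pt)) : ℝ := ∑ e ∈ E, edgeLen e

/-- `E` is the edge set of a red-blue-purple spanning graph of `(R, B, P)`. -/
def IsRBP (R B P : Finset Pt) (E : Finset (Sym2 Pt)) : Prop :=
  (∀ e ∈ E, ¬ e.IsDiag) ∧
  (∀ e ∈ E, ∀ x ∈ e, x ∈ R ∪ B ∪ P) ∧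
  ((graphOf E).induce (↑(R ∪ P) : Set Pt)).Connected ∧
  ((graphOf E).induce (↑(B ∪ P) : Set Pt)).Connected

/-- `E` is the edge set of a minimum red-blue-purple spanning graph of `(R, B, P)`. -/
def IsMinRBP (R B P : Finset Pt) (E : Finset (Sym2 Pt)) : Prop :=
  IsRBP R B P E ∧ ∀ E', IsRBP R B P E' → weight E ≤ weight E'

/-! ### Auxiliary geometric lemmas -/

open Complex in
lemma close_of_arg_close (w v : ℂ) (h : |arg w - arg v| < Real.pi / 3) :
    ‖w - v‖ < max (‖w‖) (‖v‖) ∨ w = 0 ∨ v = 0 := by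
  rcases eq_or_ne w 0 with rfl | hw; · tauto
  rcases eq_or_ne v 0 with rfl | hv; · tauto
  left
  have hid : ‖w - v‖ ^ 2 =
      ‖w‖ ^ 2 + ‖v‖ ^ 2 - 2 * (w.re * v.re + w.im * v.im) := by
    rw [Complex.sq_norm, Complex.sq_norm, Complex.sq_norm]
    simp [Complex.normSq_apply, Complex.sub_re, Complex.sub_im]
    ring
  have hre : w.re * v.re + w.im * v.im =
      ‖w‖ * ‖v‖ * Real.cos (arg w - arg v) := by
    rw [← Complex.norm_mul_cos_arg w, ← Complex.norm_mul_cos_arg v,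
      ← Complex.norm_mul_sin_arg w, ← Complex.norm_mul_sin_arg v, Real.cos_sub]
    ring
  have hcos : Real.cos (arg w - arg v) > 1 / 2 := by
    rw [← Real.cos_abs]
    calc (1:ℝ)/2 = Real.cos (Real.pi / 3) := by rw [Real.cos_pi_div_three]
    _ < Real.cos |arg w - arg v| := by
        rcases eq_or_lt_of_le (abs_nonneg (arg w - arg v)) with h0 | h0
        · rw [← h0, Real.cos_zero]; norm_num
        · exact Real.cos_lt_cos_of_nonneg_of_le_pi (abs_nonneg _)
            (by linarith [Real.pi_pos]) h
  have haw : 0 < ‖w‖ := norm_pos_iff.mpr hw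
  have hav : 0 < ‖v‖ := norm_pos_iff.mpr hv
  have hsq : ‖w - v‖ ^ 2 < max (‖w‖) (‖v‖) ^ 2 := by
    rcases le_total (‖w‖) (‖v‖) with hle | hle
    · rw [max_eq_right hle]; nlinarith [mul_pos haw hav, mul_le_mul_of_nonneg_right hle hav.le]
    · rw [max_eq_left hle]; nlinarith [mul_pos haw hav, mul_le_mul_of_nonneg_left hle haw.le]
  exact lt_of_pow_lt_pow_left₀ 2 (by positivity) hsq

open Complex in
lemma pigeon_arg (T : Finset ℂ) (h7 : 7 ≤ T.card) :
    ∃ w ∈ T, ∃ v ∈ T, w ≠ v ∧ |arg w - arg v| < Real.pi / 3 := by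
  have hpi := Real.pi_pos
  set f : ℂ → ℤ := fun w => ⌈(arg w + Real.pi) * 3 / Real.pi⌉ with hf
  have hmaps : ∀ w ∈ T, f w ∈ Finset.Icc (1:ℤ) 6 := by
    intro w _
    have h1 : -Real.pi < arg w := Complex.neg_pi_lt_arg w
    have h2 : arg w ≤ Real.pi := Complex.arg_le_pi w
    rw [Finset.mem_Icc]
    constructor
    · exact Int.ceil_pos.mpr (div_pos (by nlinarith) hpi)
    · apply Int.ceil_le.mpr
      push_cast
      rw [div_le_iff₀ hpi]
      nlinarith
  have hcard : (Finset.Icc (1:ℤ) 6).card < T.card := by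
    simp only [Int.card_Icc]
    norm_num
    omega
  obtain ⟨w, hw, v, hv, hne, heq⟩ :=
    Finset.exists_ne_map_eq_of_card_lt_of_maps_to hcard hmaps
  refine ⟨w, hw, v, hv, hne, ?_⟩
  have l1 := Int.le_ceil ((arg w + Real.pi) * 3 / Real.pi)
  have l2 := Int.ceil_lt_add_one ((arg w + Real.pi) * 3 / Real.pi)
  have l3 := Int.le_ceil ((arg v + Real.pi) * 3 / Real.pi)
  have l4 := Int.ceil_lt_add_one ((arg v + Real.pi) * 3 / Real.pi)
  have heq' : ((f w : ℝ)) = ((f v : ℝ)) := by exact_mod_cast congrArg Int.cast heq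
  rw [hf] at heq'
  simp only at heq' l1 l2 l3 l4
  have m1 : (arg w + Real.pi) * 3 / Real.pi < (arg v + Real.pi) * 3 / Real.pi + 1 := by
    calc (arg w + Real.pi) * 3 / Real.pi ≤ _ := l1
    _ < _ := heq' ▸ l4
  have m2 : (arg v + Real.pi) * 3 / Real.pi < (arg w + Real.pi) * 3 / Real.pi + 1 := by
    calc (arg v + Real.pi) * 3 / Real.pi ≤ _ := l3
    _ < _ := heq'.symm ▸ l2
  rw [div_lt_iff₀ hpi] at m1 m2
  field_simp at m1 m2
  rw [abs_lt]
  constructor <;> linarith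

lemma exists_close_pair (T : Finset Pt) (x : Pt) (hx : x ∉ T) (h7 : 7 ≤ T.card) :
    ∃ y ∈ T, ∃ z ∈ T, y ≠ z ∧ dist x y ≤ dist x z ∧ dist y z < dist x z := by
  classical
  set g : Pt → ℂ := fun p => Complex.orthonormalBasisOneI.repr.symm (p - x) with hg
  have ginj : Function.Injective g := by
    intro a b hab
    have := Complex.orthonormalBasisOneI.repr.symm.injective hab
    exact sub_left_inj.mp this
  have habs : ∀ a b : Pt, ‖g a - g b‖ = dist a b := by
    intro a b
    have hab : (a - x) - (b - x) = a - b := by abel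
    rw [hg]
    simp only [← map_sub, hab, LinearIsometryEquiv.norm_map, dist_eq_norm]
  have habs0 : ∀ a : Pt, ‖g a‖ = dist a x := by
    intro a
    rw [hg]
    rw [LinearIsometryEquiv.norm_map, dist_eq_norm]
  obtain ⟨w, hw, v, hv, hne, harg⟩ := pigeon_arg (T.image g)
    (by rwa [Finset.card_image_of_injective _ ginj])
  obtain ⟨y, hy, rfl⟩ := Finset.mem_image.mp hw
  obtain ⟨z, hz, rfl⟩ := Finset.mem_image.mp hv
  have hyz : y ≠ z := fun h => hne (by rw [h])
  have hy0 : g y ≠ 0 := by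
    intro h0
    have : ‖g y‖ = 0 := by simp [h0]
    rw [habs0] at this
    exact hx (by rwa [show y = x from by simpa using dist_eq_zero.mp this] at hy)
  have hz0 : g z ≠ 0 := by
    intro h0
    have : ‖g z‖ = 0 := by simp [h0]
    rw [habs0] at this
    exact hx (by rwa [show z = x from by simpa using dist_eq_zero.mp this] at hz)
  rcases close_of_arg_close (g y) (g z) harg with hlt | h0 | h0
  · rw [habs, habs0, habs0] at hlt
    rcases le_total (dist y x) (dist z x) with hle | hle
    · refine ⟨y, hy, z, hz, hyz, ?_, ?_⟩
      · rwa [dist_comm x y, dist_comm x z]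
      · rw [dist_comm x z]; rwa [max_eq_right hle] at hlt
    · refine ⟨z, hz, y, hy, hyz.symm, ?_, ?_⟩
      · rwa [dist_comm x z, dist_comm x y]
      · rw [dist_comm x y, dist_comm z y]; rwa [max_eq_left hle] at hlt
  · exact absurd h0 hy0
  · exact absurd h0 hz0

/-! ### Auxiliary graph lemmas -/

lemma edgeLen_mk (a b : Pt) : edgeLen s(a, b) = dist a b := rfl

lemma edgeLen_nonneg (e : Sym2 Pt) : 0 ≤ edgeLen e := by
  induction e using Sym2.ind with
  | _ a b => exact dist_nonneg (x := a) (y := b)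

lemma connected_mono' {V : Type*} {G G' : SimpleGraph V}
    (h : ∀ a b, G.Adj a b → G'.Reachable a b) (hG : G.Connected) : G'.Connected := by
  have hne : Nonempty V := hG.nonempty
  rw [SimpleGraph.connected_iff]
  refine ⟨fun a b => ?_, hne⟩
  obtain ⟨p⟩ := hG a b
  induction p with
  | nil => exact SimpleGraph.Reachable.refl _
  | cons h' p ih => exact (h _ _ h').trans ih

lemma conn_swap (E : Finset (Sym2 Pt)) (V : Set Pt) (x y z : Pt)
    (hxy : x ≠ y) (hyz : y ≠ z)
    (hcond : x ∈ V → z ∈ V → y ∈ V ∧ s(x, y) ∈ E)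
    (hconn : ((graphOf E).induce V).Connected) :
    ((graphOf (insert s(y, z) (E.erase s(x, z)))).induce V).Connected := by
  set E' := insert s(y, z) (E.erase s(x, z)) with hE'
  apply connected_mono' _ hconn
  intro a b hab
  have hab' : (↑a : Pt) ≠ ↑b ∧ s((↑a : Pt), (↑b : Pt)) ∈ E := hab
  obtain ⟨hne, hmem⟩ := hab'
  by_cases h : s((a : Pt), (b : Pt)) = s(x, z)
  · rw [Sym2.eq_iff] at h
    have key : ∀ (hxV : x ∈ V) (hzV : z ∈ V),
        ((graphOf E').induce V).Reachable ⟨x, hxV⟩ ⟨z, hzV⟩ := by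
      intro hxV hzV
      obtain ⟨hyV, hxyE⟩ := hcond hxV hzV
      have h1 : ((graphOf E').induce V).Adj ⟨x, hxV⟩ ⟨y, hyV⟩ := by
        refine ⟨hxy, ?_⟩
        apply Finset.mem_insert_of_mem
        refine Finset.mem_erase.mpr ⟨?_, hxyE⟩
        intro hcontra
        rw [Sym2.eq_iff] at hcontra
        rcases hcontra with ⟨-, h2⟩ | ⟨h2, h3⟩
        · exact hyz h2
        · exact hxy h3.symm
      have h2 : ((graphOf E').induce V).Adj ⟨y, hyV⟩ ⟨z, hzV⟩ :=
        ⟨hyz, Finset.mem_insert_self _ _⟩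
      exact h1.reachable.trans h2.reachable
    rcases h with ⟨ha, hb⟩ | ⟨ha, hb⟩
    · have hxV : x ∈ V := ha ▸ a.2
      have hzV : z ∈ V := hb ▸ b.2
      have ha' : a = ⟨x, hxV⟩ := Subtype.ext ha
      have hb' : b = ⟨z, hzV⟩ := Subtype.ext hb
      rw [ha', hb']; exact key hxV hzV
    · have hzV : z ∈ V := ha ▸ a.2
      have hxV : x ∈ V := hb ▸ b.2
      have ha' : a = ⟨z, hzV⟩ := Subtype.ext ha
      have hb' : b = ⟨x, hxV⟩ := Subtype.ext hb
      rw [ha', hb']; exact (key hxV hzV).symm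
  · exact SimpleGraph.Adj.reachable
      ⟨hne, Finset.mem_insert_of_mem (Finset.mem_erase.mpr ⟨h, hmem⟩)⟩

/-- Each color class contributes at most 6 neighbors at any point `x`. -/
lemma class_card_le (R B P : Finset Pt) (E : Finset (Sym2 Pt)) (hE : IsMinRBP R B P E)
    (x : Pt) (K : Finset Pt) (hKS : K ⊆ R ∪ B ∪ P)
    (hK1 : (↑K : Set Pt) ⊆ (↑(R ∪ P) : Set Pt) ∨ ∀ w ∈ K, w ∉ R ∪ P)
    (hK2 : (↑K : Set Pt) ⊆ (↑(B ∪ P) : Set Pt) ∨ ∀ w ∈ K, w ∉ B ∪ P) :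
    (K.filter (fun w => w ≠ x ∧ s(x, w) ∈ E)).card ≤ 6 := by
  by_contra hcard
  push_neg at hcard
  set T := K.filter (fun w => w ≠ x ∧ s(x, w) ∈ E) with hT
  have hx : x ∉ T := fun h => (Finset.mem_filter.mp h).2.1 rfl
  obtain ⟨y, hy, z, hz, hyz, hle, hlt⟩ := exists_close_pair T x hx (by omega)
  obtain ⟨hyK, hyx, hyE⟩ : y ∈ K ∧ y ≠ x ∧ s(x, y) ∈ E := by
    have := Finset.mem_filter.mp hy; exact ⟨this.1, this.2.1, this.2.2⟩
  obtain ⟨hzK, hzx, hzE⟩ : z ∈ K ∧ z ≠ x ∧ s(x, z) ∈ E := by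
    have := Finset.mem_filter.mp hz; exact ⟨this.1, this.2.1, this.2.2⟩
  set E' := insert s(y, z) (E.erase s(x, z)) with hE'def
  obtain ⟨hdiag, hvert, hc1, hc2⟩ := hE.1
  have hRBP' : IsRBP R B P E' := by
    refine ⟨?_, ?_, ?_, ?_⟩
    · intro e he
      rcases Finset.mem_insert.mp he with rfl | he'
      · rw [Sym2.mk_isDiag_iff]; exact hyz
      · exact hdiag e (Finset.mem_of_mem_erase he')
    · intro e he w hw
      rcases Finset.mem_insert.mp he with rfl | he'
      · rcases Sym2.mem_iff.mp hw with rfl | rfl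
        · exact hKS hyK
        · exact hKS hzK
      · exact hvert e (Finset.mem_of_mem_erase he') w hw
    · refine conn_swap E _ x y z hyx.symm hyz ?_ hc1
      intro hxV hzV
      rcases hK1 with hsub | hno
      · exact ⟨hsub (Finset.mem_coe.mpr hyK), hyE⟩
      · exact absurd (Finset.mem_coe.mp hzV) (hno z hzK)
    · refine conn_swap E _ x y z hyx.symm hyz ?_ hc2
      intro hxV hzV
      rcases hK2 with hsub | hno
      · exact ⟨hsub (Finset.mem_coe.mpr hyK), hyE⟩
      · exact absurd (Finset.mem_coe.mp hzV) (hno z hzK)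
  have hwlt : weight E' < weight E := by
    have h1 : weight E' ≤ edgeLen s(y, z) + weight (E.erase s(x, z)) := by
      by_cases hmem : s(y, z) ∈ E.erase s(x, z)
      · rw [hE'def, Finset.insert_eq_self.mpr hmem]
        have := edgeLen_nonneg s(y, z)
        linarith
      · rw [hE'def, weight, Finset.sum_insert hmem]
        exact le_of_eq rfl
    have h2 : weight (E.erase s(x, z)) + edgeLen s(x, z) = weight E :=
      Finset.sum_erase_add E _ hzE
    rw [edgeLen_mk] at h1
    rw [edgeLen_mk] at h2
    rw [dist_comm x y] at hle
    linarith
  exact absurd (hE.2 E' hRBP') (by linarith)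

/-- Every vertex of a minimum red-blue-purple spanning graph has
degree at most 18. -/
theorem minRBP_degree_le_18 (R B P : Finset Pt)
    (hRB : Disjoint R B) (hRP : Disjoint R P) (hBP : Disjoint B P)
    (E : Finset (Sym2 Pt)) (hE : IsMinRBP R B P E) :
    ∀ x : Pt, (E.filter (fun e => x ∈ e)).card ≤ 18 := by
  intro x
  obtain ⟨hdiag, hvert, hc1, hc2⟩ := hE.1
  have himg : E.filter (fun e => x ∈ e) ⊆
      ((R ∪ B ∪ P).filter (fun w => w ≠ x ∧ s(x, w) ∈ E)).image (fun w => s(x, w)) := by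
    intro e he
    obtain ⟨heE, hxe⟩ := Finset.mem_filter.mp he
    set w := Sym2.Mem.other hxe with hw
    have hspec : s(x, w) = e := Sym2.other_spec hxe
    have hwS : w ∈ R ∪ B ∪ P := hvert e heE w (by rw [← hspec]; exact Sym2.mem_mk_right x w)
    have hwx : w ≠ x := by
      intro hcontra
      apply hdiag e heE
      rw [← hspec, hcontra, Sym2.mk_isDiag_iff]
    refine Finset.mem_image.mpr ⟨w, Finset.mem_filter.mpr ⟨hwS, hwx, by rwa [hspec]⟩, hspec⟩
  have hcard1 : (E.filter (fun e => x ∈ e)).card ≤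
      ((R ∪ B ∪ P).filter (fun w => w ≠ x ∧ s(x, w) ∈ E)).card :=
    le_trans (Finset.card_le_card himg) (Finset.card_image_le)
  rw [Finset.filter_union, Finset.filter_union] at hcard1
  have hR : (R.filter (fun w => w ≠ x ∧ s(x, w) ∈ E)).card ≤ 6 := by
    apply class_card_le R B P E hE x R (by intro w hw; exact Finset.mem_union_left _ (Finset.mem_union_left _ hw))
    · left; intro w hw; exact Finset.mem_coe.mpr (Finset.mem_union_left _ (Finset.mem_coe.mp hw))
    · right; intro w hw hcon
      rcases Finset.mem_union.mp hcon with h | h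
      · exact (Finset.disjoint_left.mp hRB) hw h
      · exact (Finset.disjoint_left.mp hRP) hw h
  have hB : (B.filter (fun w => w ≠ x ∧ s(x, w) ∈ E)).card ≤ 6 := by
    apply class_card_le R B P E hE x B (by intro w hw; exact Finset.mem_union_left _ (Finset.mem_union_right _ hw))
    · right; intro w hw hcon
      rcases Finset.mem_union.mp hcon with h | h
      · exact (Finset.disjoint_right.mp hRB) hw h
      · exact (Finset.disjoint_left.mp hBP) hw h
    · left; intro w hw; exact Finset.mem_coe.mpr (Finset.mem_union_left _ (Finset.mem_coe.mp hw))
  have hP : (P.filter (fun w => w ≠ x ∧ s(x, w) ∈ E)).card ≤ 6 := by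
    apply class_card_le R B P E hE x P (by intro w hw; exact Finset.mem_union_right _ hw)
    · left; intro w hw; exact Finset.mem_coe.mpr (Finset.mem_union_right _ (Finset.mem_coe.mp hw))
    · left; intro w hw; exact Finset.mem_coe.mpr (Finset.mem_union_right _ (Finset.mem_coe.mp hw))
  calc (E.filter (fun e => x ∈ e)).card ≤ _ := hcard1
  _ ≤ (R.filter (fun w => w ≠ x ∧ s(x, w) ∈ E) ∪ B.filter (fun w => w ≠ x ∧ s(x, w) ∈ E)).card
      + (P.filter (fun w => w ≠ x ∧ s(x, w) ∈ E)).card := Finset.card_union_le _ _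
  _ ≤ (R.filter (fun w => w ≠ x ∧ s(x, w) ∈ E)).card
      + (B.filter (fun w => w ≠ x ∧ s(x, w) ∈ E)).card
      + (P.filter (fun w => w ≠ x ∧ s(x, w) ∈ E)).card := by
        have := Finset.card_union_le (R.filter (fun w => w ≠ x ∧ s(x, w) ∈ E))
          (B.filter (fun w => w ≠ x ∧ s(x, w) ∈ E))
        omega
  _ ≤ 18 := by omega
end
end

section
/- In a minimum red-blue-purple spanning graph, the subgraph induced by the red and purple points (R ∪ P) is a tree (i.e., it is connected and contains no cycle), and likewise the subgraph induced by the blue and purple points (B ∪ P) is a tree. -/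
open scoped Classical

noncomputable section

lemma preconnected_of_forall_adj {V : Type*} {G G' : SimpleGraph V}
    (hG : G.Preconnected) (h : ∀ ⦃x y : V⦄, G.Adj x y → G'.Reachable x y) :
    G'.Preconnected := by
  intro a b
  obtain ⟨p⟩ := hG a b
  induction p with
  | nil => exact SimpleGraph.Reachable.refl _
  | cons ha p ih => exact (h ha).trans ih

lemma exists_edge_of_mem_support {V : Type*} {G : SimpleGraph V} {u v x : V}
    (p : G.Walk u v) (hp : ¬ p.Nil) (hx : x ∈ p.support) :
    ∃ e ∈ p.edges, x ∈ e := by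
  induction p with
  | nil => simp at hp
  | cons h q ih =>
    rename_i a w _
    rw [SimpleGraph.Walk.support_cons, List.mem_cons] at hx
    rcases hx with rfl | hx
    · exact ⟨s(x, w), by simp, Sym2.mem_mk_left _ _⟩
    · cases q with
      | nil =>
        rw [SimpleGraph.Walk.support_nil, List.mem_singleton] at hx
        subst hx
        exact ⟨s(a, x), by simp, Sym2.mem_mk_right _ _⟩
      | cons h' q' =>
        obtain ⟨e, he, hxe⟩ := ih SimpleGraph.Walk.not_nil_cons hx
        exact ⟨e, by rw [SimpleGraph.Walk.edges_cons]; exact List.mem_cons_of_mem _ he, hxe⟩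

lemma detour_aux {V : Type*} [DecidableEq V] {G : SimpleGraph V} {a b : V} (c' : G.Walk a a)
    (hc' : c'.IsCycle) (he' : s(a, b) ∈ c'.edges) :
    ∃ p : G.Walk a b, s(a, b) ∉ p.edges ∧ ∀ x ∈ p.support, x ∈ c'.support := by
  have hab : a ≠ b := (c'.adj_of_mem_edges he').ne
  cases c' with
  | nil => simp at he'
  | cons h q =>
    rename_i w
    have hnodup : (SimpleGraph.Walk.cons h q).edges.Nodup := hc'.edges_nodup
    rw [SimpleGraph.Walk.edges_cons, List.nodup_cons] at hnodup
    by_cases hq : s(a, b) ∈ q.edges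
    · have hwb : w ≠ b := by
        rintro rfl
        exact hnodup.1 hq
      have hbq : b ∈ q.support := SimpleGraph.Walk.snd_mem_support_of_mem_edges q hq
      refine ⟨SimpleGraph.Walk.cons h (q.takeUntil b hbq), ?_, ?_⟩
      · rw [SimpleGraph.Walk.edges_cons, List.mem_cons]
        rintro (habw | hmem)
        · rw [Sym2.eq_iff] at habw
          rcases habw with ⟨-, rfl⟩ | ⟨rfl, -⟩
          · exact hwb rfl
          · exact h.ne rfl
        · have haTU : a ∈ (q.takeUntil b hbq).support :=
            SimpleGraph.Walk.fst_mem_support_of_mem_edges _ hmem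
          have hsupnd : q.support.Nodup := by
            have h2 := hc'.2
            rwa [SimpleGraph.Walk.support_cons, List.tail_cons] at h2
          have hspec := q.take_spec hbq
          have hsupp : q.support
              = (q.takeUntil b hbq).support ++ (q.dropUntil b hbq).support.tail := by
            rw [← SimpleGraph.Walk.support_append, hspec]
          rw [hsupp, List.nodup_append] at hsupnd
          have haDrop : a ∈ (q.dropUntil b hbq).support := SimpleGraph.Walk.end_mem_support _
          rw [SimpleGraph.Walk.support_eq_cons, List.mem_cons] at haDrop
          rcases haDrop with rfl | haDrop
          · exact hab rfl
          · exact hsupnd.2.2 a haTU a haDrop rfl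
      · intro x hx
        rw [SimpleGraph.Walk.support_cons, List.mem_cons] at hx
        rw [SimpleGraph.Walk.support_cons, List.mem_cons]
        rcases hx with rfl | hx
        · exact Or.inl rfl
        · exact Or.inr (SimpleGraph.Walk.support_takeUntil_subset q hbq hx)
    · rw [SimpleGraph.Walk.edges_cons, List.mem_cons] at he'
      rcases he' with habw | hmem
      · rw [Sym2.eq_iff] at habw
        rcases habw with ⟨-, rfl⟩ | ⟨rfl, -⟩
        · refine ⟨q.reverse, ?_, ?_⟩
          · rw [SimpleGraph.Walk.edges_reverse, List.mem_reverse]; exact hq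
          · intro x hx
            rw [SimpleGraph.Walk.support_reverse, List.mem_reverse] at hx
            rw [SimpleGraph.Walk.support_cons, List.mem_cons]
            exact Or.inr hx
        · exact absurd rfl h.ne
      · exact absurd hmem hq

lemma detour {V : Type*} [DecidableEq V] {G : SimpleGraph V} {v a b : V} {c : G.Walk v v}
    (hc : c.IsCycle) (he : s(a, b) ∈ c.edges) :
    ∃ p : G.Walk a b, s(a, b) ∉ p.edges ∧ ∀ x ∈ p.support, x ∈ c.support := by
  have ha : a ∈ c.support := SimpleGraph.Walk.fst_mem_support_of_mem_edges c he
  have hc' : (c.rotate a ha).IsCycle := hc.rotate ha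
  have he' : s(a, b) ∈ (c.rotate a ha).edges := (c.rotate_edges a ha).mem_iff.mpr he
  obtain ⟨p, hp1, hp2⟩ := detour_aux (c.rotate a ha) hc' he'
  refine ⟨p, hp1, fun x hx => ?_⟩
  have hx' := hp2 x hx
  rw [SimpleGraph.Walk.support_eq_cons, List.mem_cons] at hx'
  rcases hx' with rfl | hx'
  · exact ha
  · exact List.mem_of_mem_tail ((SimpleGraph.Walk.support_rotate c a ha).mem_iff.mp hx')

lemma transfer_reach {E E' : Finset (Sym2 Pt)} {s₁ : Set Pt} {u v : ↑s₁}
    (p : ((graphOf E).induce s₁).Walk u v) (s₂ : Set Pt)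
    (hE' : ∀ e ∈ p.edges, Sym2.map (Subtype.val) e ∈ E')
    (hs : ∀ x ∈ p.support, (x : Pt) ∈ s₂) (hu : (u : Pt) ∈ s₂) (hv : (v : Pt) ∈ s₂) :
    ((graphOf E').induce s₂).Reachable ⟨u, hu⟩ ⟨v, hv⟩ := by
  induction p with
  | nil => exact SimpleGraph.Reachable.refl _
  | cons h q ih =>
    rename_i x y z
    have hy : (y : Pt) ∈ s₂ := hs y (by simp)
    have hadj : ((graphOf E').induce s₂).Adj ⟨x, hu⟩ ⟨y, hy⟩ := by
      refine ⟨h.1, ?_⟩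
      have := hE' s(x, y) (by simp)
      rwa [Sym2.map_pair_eq] at this
    exact hadj.reachable.trans (ih (fun e heq => hE' e (by simp [heq]))
      (fun w hw => hs w (by simp [hw])) hy hv)

lemma acyclic_RP (R B P : Finset Pt) (hRB : Disjoint R B) (hRP : Disjoint R P)
    (E : Finset (Sym2 Pt)) (hE : IsMinRBP R B P E) :
    ((graphOf E).induce (↑(R ∪ P) : Set Pt)).IsAcyclic := by
  classical
  intro v c hc
  obtain ⟨⟨hdiag, hcol, h1, h2⟩, hmin⟩ := hE
  obtain ⟨a, b, he, hside⟩ :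
      ∃ a b : (↑(R ∪ P) : Set Pt), s(a, b) ∈ c.edges ∧
        ((a : Pt) ∈ R ∨ ∀ x ∈ c.support, (x : Pt) ∈ P) := by
    by_cases hP : ∀ x ∈ c.support, (x : Pt) ∈ P
    · cases c with
      | nil => exact absurd hc.not_nil (by simp)
      | cons h q =>
        rename_i w
        exact ⟨v, w, by rw [SimpleGraph.Walk.edges_cons]; exact List.mem_cons_self,
          Or.inr hP⟩
    · push_neg at hP
      obtain ⟨x, hxsup, hxP⟩ := hP
      have hxR : (x : Pt) ∈ R := by
        have hx2 := x.2
        simp only [Finset.coe_union, Set.mem_union, Finset.mem_coe] at hx2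
        tauto
      obtain ⟨e, hec, hxe⟩ := exists_edge_of_mem_support c hc.not_nil hxsup
      revert hec hxe
      induction e using Sym2.ind with | _ a0 b0 =>
      intro hec hxe
      rw [Sym2.mem_iff] at hxe
      rcases hxe with rfl | rfl
      · exact ⟨x, b0, hec, Or.inl hxR⟩
      · exact ⟨x, a0, by rwa [Sym2.eq_swap], Or.inl hxR⟩
  have hadj := c.adj_of_mem_edges he
  have hne : (a : Pt) ≠ (b : Pt) := hadj.1
  have heE : s((a : Pt), (b : Pt)) ∈ E := hadj.2
  set e' : Sym2 Pt := s((a : Pt), (b : Pt)) with he'def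
  obtain ⟨p, hp1, hp2⟩ := detour hc he
  have hpE : ∀ e ∈ p.edges, Sym2.map (Subtype.val) e ∈ E.erase e' := by
    intro e hep
    have hnee : e ≠ s(a, b) := fun hh => hp1 (hh ▸ hep)
    refine Finset.mem_erase.mpr ⟨?_, ?_⟩
    · intro hcontra
      apply hnee
      refine Sym2.map.injective Subtype.val_injective ?_
      rw [hcontra, he'def, Sym2.map_pair_eq]
    · revert hep
      induction e using Sym2.ind with | _ x y =>
      intro hep
      rw [Sym2.map_pair_eq]
      exact (p.adj_of_mem_edges hep).2
  have hreach1 : ((graphOf (E.erase e')).induce (↑(R ∪ P) : Set Pt)).Reachable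
      ⟨(a : Pt), a.2⟩ ⟨(b : Pt), b.2⟩ :=
    transfer_reach p _ hpE (fun x _ => x.2) a.2 b.2
  have hconn1 : ((graphOf (E.erase e')).induce (↑(R ∪ P) : Set Pt)).Connected := by
    have hne1 : Nonempty (↑(R ∪ P) : Set Pt) := h1.nonempty
    refine SimpleGraph.Connected.mk (preconnected_of_forall_adj h1.preconnected ?_)
    rintro ⟨x, hx2⟩ ⟨y, hy2⟩ hxy
    by_cases hcase : s(x, y) = e'
    · rw [he'def, Sym2.eq_iff] at hcase
      rcases hcase with ⟨rfl, rfl⟩ | ⟨rfl, rfl⟩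
      · exact hreach1
      · exact hreach1.symm
    · exact SimpleGraph.Adj.reachable
        ⟨hxy.1, Finset.mem_erase.mpr ⟨hcase, hxy.2⟩⟩
  have hconn2 : ((graphOf (E.erase e')).induce (↑(B ∪ P) : Set Pt)).Connected := by
    have hne2 : Nonempty (↑(B ∪ P) : Set Pt) := h2.nonempty
    refine SimpleGraph.Connected.mk (preconnected_of_forall_adj h2.preconnected ?_)
    rintro ⟨x, hx2⟩ ⟨y, hy2⟩ hxy
    by_cases hcase : s(x, y) = e'
    · rcases hside with haR | hallP
      · exfalso
        rw [he'def, Sym2.eq_iff] at hcase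
        have hxy2 : (a : Pt) ∈ (↑(B ∪ P) : Set Pt) := by
          rcases hcase with ⟨rfl, -⟩ | ⟨-, rfl⟩
          · exact hx2
          · exact hy2
        simp only [Finset.coe_union, Set.mem_union, Finset.mem_coe] at hxy2
        rcases hxy2 with hB | hP'
        · exact (Finset.disjoint_left.mp hRB) haR hB
        · exact (Finset.disjoint_left.mp hRP) haR hP'
      · have haP : (a : Pt) ∈ P := hallP a (SimpleGraph.Walk.fst_mem_support_of_mem_edges c he)
        have hbP : (b : Pt) ∈ P := hallP b (SimpleGraph.Walk.snd_mem_support_of_mem_edges c he)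
        have hmem2 : ∀ z ∈ p.support, (z : Pt) ∈ (↑(B ∪ P) : Set Pt) := by
          intro z hz
          have := hallP z (hp2 z hz)
          simp only [Finset.coe_union, Set.mem_union, Finset.mem_coe]
          exact Or.inr this
        have hreach2 := transfer_reach p (↑(B ∪ P) : Set Pt) hpE hmem2
          (by simp only [Finset.coe_union, Set.mem_union, Finset.mem_coe]; exact Or.inr haP)
          (by simp only [Finset.coe_union, Set.mem_union, Finset.mem_coe]; exact Or.inr hbP)
        rw [he'def, Sym2.eq_iff] at hcase
        rcases hcase with ⟨rfl, rfl⟩ | ⟨rfl, rfl⟩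
        · exact hreach2
        · exact hreach2.symm
    · exact SimpleGraph.Adj.reachable
        ⟨hxy.1, Finset.mem_erase.mpr ⟨hcase, hxy.2⟩⟩
  have hRBP'' : IsRBP R B P (E.erase e') :=
    ⟨fun e heq => hdiag e (Finset.mem_of_mem_erase heq),
     fun e heq => hcol e (Finset.mem_of_mem_erase heq), hconn1, hconn2⟩
  have hsum := Finset.sum_erase_add E edgeLen heE
  have hpos : 0 < edgeLen e' := by
    have hlen : edgeLen e' = dist (a : Pt) (b : Pt) := rfl
    rw [hlen]
    exact dist_pos.mpr hne
  have hle := hmin _ hRBP''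
  rw [weight, weight] at hle
  rw [he'def] at hsum hpos
  linarith

lemma IsRBP_swap {R B P : Finset Pt} {E : Finset (Sym2 Pt)} (h : IsRBP R B P E) :
    IsRBP B R P E := by
  obtain ⟨h1, h2, h3, h4⟩ := h
  refine ⟨h1, ?_, h4, h3⟩
  intro e heq x hx
  have := h2 e heq x hx
  simp only [Finset.mem_union] at this ⊢
  tauto

/-- In a minimum red-blue-purple spanning graph, the subgraph induced
by the red and purple points is a tree, and likewise the subgraph induced by the
blue and purple points is a tree. -/
theorem minRBP_induced_subgraphs_are_trees (R B P : Finset Pt)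
    (hRB : Disjoint R B) (hRP : Disjoint R P) (hBP : Disjoint B P)
    (E : Finset (Sym2 Pt)) (hE : IsMinRBP R B P E) :
    ((graphOf E).induce (↑(R ∪ P) : Set Pt)).IsTree ∧
    ((graphOf E).induce (↑(B ∪ P) : Set Pt)).IsTree := by
  have hE' : IsMinRBP B R P E :=
    ⟨IsRBP_swap hE.1, fun E' hE'' => hE.2 E' (IsRBP_swap hE'')⟩
  exact ⟨⟨hE.1.2.2.1, acyclic_RP R B P hRB hRP E hE⟩,
    ⟨hE.1.2.2.2, acyclic_RP B R P hRB.symm hBP E hE'⟩⟩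
end
end
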